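/- Assume κ is UD-self-dual and 𝗊 : P → ℝ_{>0} is such that 𝗊² satisfies the Kerov condition with a parameter t > 0. Then for every n ≥ 0: #𝔾_{j−1} ≤ #𝔾_j for 1 ≤ j ≤ n, and the characteristic polynomial of the linear operator T_n on the (#𝔾_n)-dimensional real vector space of functions on 𝔾_n equals ∏_{j=0}^{n} (X − (1 − j(j−1+t)/((n+1)(n+t))))^{m_j}, where m_j := #𝔾_j − #𝔾_{j−1} and #𝔾_{−1} := 0. In particular, the eigenvalue 1 of T_n is simple. -/

import Mathlib

open scoped BigOperators Classical

namespace IdealGraph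

variable {P : Type*} [PartialOrder P]

/-- A finite order ideal of the poset `P`, encoded as a down-closed `Finset`. -/
def IsIdealF (s : Finset P) : Prop := ∀ ⦃x⦄, x ∈ s → ∀ ⦃y⦄, y ≤ x → y ∈ s

/-- The vertex set of the branching graph of ideals `𝔾 = J(P)`. -/
abbrev G (P : Type*) [PartialOrder P] := {s : Finset P // IsIdealF s}

/-- The `n`-th level `𝔾_n` of the branching graph. -/
abbrev Lvl (P : Type*) [PartialOrder P] (n : ℕ) := {s : Finset P // IsIdealF s ∧ s.card = n}

/-- `CoversF μ l` : `μ ↗ l` is an edge of the branching graph of ideals. -/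
def CoversF (μ l : Finset P) : Prop :=
  IsIdealF μ ∧ IsIdealF l ∧ μ ⊆ l ∧ l.card = μ.card + 1

/-- All levels `𝔾_n` of the graph are finite. -/
def LevelsFinite (P : Type*) [PartialOrder P] : Prop :=
  ∀ n : ℕ, {s : Finset P | IsIdealF s ∧ s.card = n}.Finite

/-- An edge multiplicity function is (strictly) positive on all edges. -/
def EdgePositive (κ : Finset P → Finset P → ℝ) : Prop :=
  ∀ μ l, CoversF μ l → 0 < κ μ l

/-- UD-self-duality of a multiplicity function: for every quadrangle `μ ρ ν λ`. -/
def UDSelfDual (κ : Finset P → Finset P → ℝ) : Prop :=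
  ∀ μ ρ l ν : Finset P, CoversF μ ρ → CoversF ρ ν → CoversF μ l → CoversF l ν →
    ρ ≠ l → κ μ l * κ μ ρ = κ l ν * κ ρ ν

/-- The value of a function `q : P → R` on the box `l ∖ μ` of an edge `μ ↗ l`. -/
noncomputable def bx {R : Type*} [AddCommMonoid R] (q : P → R) (μ l : Finset P) : R :=
  ∑ x ∈ l \ μ, q x

/-- The Kerov condition with parameter `t` for the function `q2 = 𝗊²`. -/
def KerovCond (κ : Finset P → Finset P → ℝ) (q2 : P → ℂ) (t : ℂ) : Prop :=
  ∀ l : Finset P, IsIdealF l →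
    (∑' ν : {ν : Finset P // CoversF l ν}, (κ l ν.1 : ℂ) ^ 2 * bx q2 l ν.1) -
      (∑' μ : {μ : Finset P // CoversF μ l}, (κ μ.1 l : ℂ) ^ 2 * bx q2 μ.1 l)
      = 2 * (l.card : ℂ) + t

/-- Weighted number of saturated chains of length `n` from the ideal `μ` up to the ideal `l`. -/
noncomputable def dimRel (κ : Finset P → Finset P → ℝ) : ℕ → Finset P → Finset P → ℝ
  | 0, μ, l => if μ = l then 1 else 0
  | n + 1, μ, l =>
      ∑ x ∈ l, if CoversF (l.erase x) l ∧ μ ⊆ l.erase x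
        then κ (l.erase x) l * dimRel κ n μ (l.erase x) else 0

/-- Relative dimension `dim(μ, l)`. -/
noncomputable def dimI (κ : Finset P → Finset P → ℝ) (μ l : Finset P) : ℝ :=
  dimRel κ (l.card - μ.card) μ l

/-- Dimension `dim l = dim(∅, l)`. -/
noncomputable def dimT (κ : Finset P → Finset P → ℝ) (l : Finset P) : ℝ :=
  dimI κ ∅ l

/-- The relative dimension function `P*_μ`. -/
noncomputable def Pstar (κ : Finset P → Finset P → ℝ) (μ l : Finset P) : ℝ :=
  (l.card.descFactorial μ.card : ℝ) * dimI κ μ l / dimT κ l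

/-- The mixed measure `M_ξ`. -/
noncomputable def Mxi (κ : Finset P → Finset P → ℝ) (q : P → ℝ) (t ξ : ℝ) (l : Finset P) : ℝ :=
  (1 - ξ) ^ t * ξ ^ l.card * (dimT κ l / (Nat.factorial l.card : ℝ)) ^ 2 * ∏ x ∈ l, q x ^ 2

/-- The coherent measure `M_n(l)` (for `n = |l|`). -/
noncomputable def Mcoh (κ : Finset P → Finset P → ℝ) (q : P → ℝ) (t : ℝ) (l : Finset P) : ℝ :=
  dimT κ l ^ 2 * (∏ x ∈ l, q x ^ 2) /
    ((Nat.factorial l.card : ℝ) * Polynomial.eval t (ascPochhammer ℝ l.card))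

/-- The jump rates `Q(l, ρ)` of the Markov jump dynamics. -/
noncomputable def Qrate (κ : Finset P → Finset P → ℝ) (q : P → ℝ) (t ξ : ℝ)
    (l ρ : Finset P) : ℝ :=
  if CoversF ρ l then (1 - ξ)⁻¹ * l.card * (κ ρ l * dimT κ ρ / dimT κ l)
  else if CoversF l ρ then
    (1 - ξ)⁻¹ * (ξ * ((l.card : ℝ) + t)) *
      ((Mcoh κ q t ρ / Mcoh κ q t l) * (κ l ρ * dimT κ l / dimT κ ρ))
  else if ρ = l then -((1 - ξ)⁻¹ * ((l.card : ℝ) + ξ * ((l.card : ℝ) + t)))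
  else 0

/-- The function `𝔐_l`. -/
noncomputable def Mfrak (κ : Finset P → Finset P → ℝ) (q : P → ℝ) (ξ : ℝ)
    (l ν : Finset P) : ℝ :=
  ∑ μ ∈ l.powerset.filter (fun s => IsIdealF s),
    (ξ / (ξ - 1)) ^ (l.card - μ.card) *
      (dimI κ μ l / (Nat.factorial (l.card - μ.card) : ℝ)) *
      (∏ x ∈ l \ μ, q x ^ 2) * Pstar κ μ ν

/-- The operator `U` built from `κ` and `q`. -/
noncomputable def Uop (κ : Finset P → Finset P → ℝ) (q : P → ℂ) (f : Finset P → ℂ) :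
    Finset P → ℂ :=
  fun l => ∑' μ : {μ : Finset P // CoversF μ l}, (κ μ.1 l : ℂ) * bx q μ.1 l * f μ.1

/-- The operator `D` built from `κ` and `q`. -/
noncomputable def Dop (κ : Finset P → Finset P → ℝ) (q : P → ℂ) (f : Finset P → ℂ) :
    Finset P → ℂ :=
  fun l => ∑' ν : {ν : Finset P // CoversF l ν}, (κ l ν.1 : ℂ) * bx q l ν.1 * f ν.1

/-- The standard basis vector `δ_l`. -/
noncomputable def delta (l : Finset P) : Finset P → ℂ := fun ρ => if ρ = l then 1 else 0


/-- Down transition probability `p↓(ν, μ)`. -/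
noncomputable def pDown {P : Type*} [PartialOrder P]
    (κ : Finset P → Finset P → ℝ) (ν μ : Finset P) : ℝ :=
  if CoversF μ ν then κ μ ν * dimT κ μ / dimT κ ν else 0

/-- Up transition probability `p↑(l, ν)`. -/
noncomputable def pUp {P : Type*} [PartialOrder P]
    (κ : Finset P → Finset P → ℝ) (q : P → ℝ) (t : ℝ) (l ν : Finset P) : ℝ :=
  if CoversF l ν then (Mcoh κ q t ν / Mcoh κ q t l) * (κ l ν * dimT κ l / dimT κ ν) else 0

/-- The up/down transition matrix `T_n(l, l')` (for `n = |l|`). -/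
noncomputable def TnMat {P : Type*} [PartialOrder P]
    (κ : Finset P → Finset P → ℝ) (q : P → ℝ) (t : ℝ) (l l' : Finset P) : ℝ :=
  ∑' ν : Lvl P (l.card + 1), pUp κ q t l ν.1 * pDown κ ν.1 l'

/-- characteristic polynomial wrapper (to control instance arguments). -/
noncomputable def charpolyOf {ι : Type*} (instF : Fintype ι) (instD : DecidableEq ι)
    (M : Matrix ι ι ℝ) : Polynomial ℝ :=
  @Matrix.charpoly ℝ _ ι instD instF M

set_option linter.unusedSectionVars false
/-! ### Basic combinatorics of covers -/

lemma CoversF.box_singleton {μ l : Finset P} (h : CoversF μ l) : ∃ x, l \ μ = {x} := by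
  obtain ⟨-, -, hsub, hcard⟩ := h
  have : (l \ μ).card = 1 := by rw [Finset.card_sdiff_of_subset hsub]; omega
  exact Finset.card_eq_one.mp this

lemma bx_single {R : Type*} [AddCommMonoid R] (f : P → R) {μ l : Finset P}
    {x : P} (h : l \ μ = {x}) : bx f μ l = f x := by
  simp [bx, h]

lemma bx_sq {μ l : Finset P} (h : CoversF μ l) (f : P → ℝ) :
    bx f μ l ^ 2 = bx (fun x => f x ^ 2) μ l := by
  obtain ⟨x, hx⟩ := h.box_singleton
  rw [bx_single f hx, bx_single _ hx]

lemma isIdealF_union {a b : Finset P} (ha : IsIdealF a) (hb : IsIdealF b) :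
    IsIdealF (a ∪ b) := by
  intro x hx y hy
  rcases Finset.mem_union.mp hx with h | h
  · exact Finset.mem_union_left _ (ha h hy)
  · exact Finset.mem_union_right _ (hb h hy)

lemma isIdealF_inter {a b : Finset P} (ha : IsIdealF a) (hb : IsIdealF b) :
    IsIdealF (a ∩ b) := by
  intro x hx y hy
  rcases Finset.mem_inter.mp hx with ⟨h1, h2⟩
  exact Finset.mem_inter.mpr ⟨ha h1 hy, hb h2 hy⟩

lemma isIdealF_empty : IsIdealF (∅ : Finset P) := by intro x hx; simp at hx

lemma not_subset_of_ne_same_card {l l' : Finset P} (hne : l ≠ l') (hcard : l'.card = l.card) :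
    ¬ l' ⊆ l := fun h => hne (Finset.eq_of_subset_of_card_le h hcard.ge).symm

/-- A common cover of two distinct ideals of the same size must be their union. -/
lemma common_cover_eq {l l' ν : Finset P} (hne : l ≠ l') (hcard : l'.card = l.card)
    (h1 : CoversF l ν) (h2 : CoversF l' ν) : ν = l ∪ l' := by
  obtain ⟨-, -, hsub1, hc1⟩ := h1
  obtain ⟨-, -, hsub2, -⟩ := h2
  have hu : l ∪ l' ⊆ ν := Finset.union_subset hsub1 hsub2
  have hlt : l.card < (l ∪ l').card := by
    apply Finset.card_lt_card
    exact ⟨Finset.subset_union_left,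
      fun hs => not_subset_of_ne_same_card hne hcard ((Finset.subset_union_right).trans hs)⟩
  have hle : (l ∪ l').card ≤ ν.card := Finset.card_le_card hu
  exact (Finset.eq_of_subset_of_card_le hu (by omega)).symm

/-- A common lower cover of two distinct ideals of the same size must be their intersection. -/
lemma common_lower_eq {l l' μ : Finset P} (hne : l ≠ l') (hcard : l'.card = l.card)
    (h1 : CoversF μ l) (h2 : CoversF μ l') : μ = l ∩ l' := by
  obtain ⟨-, -, hsub1, hc1⟩ := h1
  obtain ⟨-, -, hsub2, -⟩ := h2
  have hu : μ ⊆ l ∩ l' := Finset.subset_inter hsub1 hsub2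
  have hlt : (l ∩ l').card < l.card := by
    apply Finset.card_lt_card
    exact ⟨Finset.inter_subset_left, fun hs =>
      not_subset_of_ne_same_card hne.symm hcard.symm (hs.trans Finset.inter_subset_right)⟩
  have hle : μ.card ≤ (l ∩ l').card := Finset.card_le_card hu
  exact Finset.eq_of_subset_of_card_le hu (by omega)

/-! ### Quadrangles -/

lemma quadrangle {l l' : Finset P} (hl : IsIdealF l) (hl' : IsIdealF l')
    (hne : l ≠ l') (hcard : l'.card = l.card) (hU : (l ∪ l').card = l.card + 1) :
    CoversF l (l ∪ l') ∧ CoversF l' (l ∪ l') ∧ CoversF (l ∩ l') l ∧ CoversF (l ∩ l') l' ∧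
      (l ∪ l') \ l = l' \ (l ∩ l') ∧ (l ∪ l') \ l' = l \ (l ∩ l') := by
  have hie := Finset.card_union_add_card_inter l l'
  refine ⟨⟨hl, isIdealF_union hl hl', Finset.subset_union_left, hU⟩,
    ⟨hl', isIdealF_union hl hl', Finset.subset_union_right, by omega⟩,
    ⟨isIdealF_inter hl hl', hl, Finset.inter_subset_left, by omega⟩,
    ⟨isIdealF_inter hl hl', hl', Finset.inter_subset_right, by omega⟩, ?_, ?_⟩ <;>
  · ext a
    simp only [Finset.mem_sdiff, Finset.mem_union, Finset.mem_inter]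
    tauto

/-! ### Positivity of dimensions -/

lemma dimRel_nonneg {κ : Finset P → Finset P → ℝ} (hκ : EdgePositive κ) :
    ∀ n (μ l : Finset P), 0 ≤ dimRel κ n μ l := by
  intro n
  induction n with
  | zero => intro μ l; rw [dimRel]; positivity
  | succ n ih =>
    intro μ l
    rw [dimRel]
    refine Finset.sum_nonneg fun x hx => ?_
    split_ifs with h
    · exact mul_nonneg (hκ _ _ h.1).le (ih _ _)
    · exact le_refl 0
lemma isIdealF_erase_max {l : Finset P} (hl : IsIdealF l) {x : P} (hx : x ∈ l)
    (hmax : ∀ b ∈ l, ¬ x < b) : IsIdealF (l.erase x) := by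
  intro z hz y hy
  have hzl : z ∈ l := Finset.mem_of_mem_erase hz
  have hyl : y ∈ l := hl hzl hy
  refine Finset.mem_erase.mpr ⟨?_, hyl⟩
  rintro rfl
  exact hmax z hzl (lt_of_le_of_ne hy (Finset.ne_of_mem_erase hz ∘ Eq.symm))

lemma dimT_card (κ : Finset P → Finset P → ℝ) (l : Finset P) :
    dimT κ l = dimRel κ l.card ∅ l := by
  simp [dimT, dimI]

lemma dimT_pos {κ : Finset P → Finset P → ℝ} (hκ : EdgePositive κ) :
    ∀ n (l : Finset P), IsIdealF l → l.card = n → 0 < dimT κ l := by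
  intro n
  induction n with
  | zero =>
    intro l _ hc
    rw [dimT_card, hc, dimRel]
    simp [Finset.card_eq_zero.mp hc]
  | succ n ih =>
    intro l hl hc
    have hne : l.Nonempty := Finset.card_pos.mp (by omega)
    obtain ⟨x, hx, hmax⟩ : ∃ x ∈ l, ∀ b ∈ l, ¬ x < b := by
      obtain ⟨x, hx, hm⟩ := Finset.exists_maximal hne
      exact ⟨x, hx, fun b hb hlt => lt_irrefl _ (hlt.trans_le (hm hb hlt.le))⟩
    have hIe : IsIdealF (l.erase x) := isIdealF_erase_max hl hx hmax
    have hce : (l.erase x).card = n := by rw [Finset.card_erase_of_mem hx]; omega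
    have hcov : CoversF (l.erase x) l := ⟨hIe, hl, Finset.erase_subset _ _, by omega⟩
    rw [dimT_card, hc, dimRel]
    refine Finset.sum_pos' (fun y hy => ?_) ⟨x, hx, ?_⟩
    · split_ifs with h
      · exact mul_nonneg (hκ _ _ h.1).le (dimRel_nonneg hκ _ _ _)
      · exact le_refl 0
    · rw [if_pos ⟨hcov, Finset.empty_subset _⟩]
      have := ih (l.erase x) hIe hce
      rw [dimT_card, hce] at this
      exact mul_pos (hκ _ _ hcov) this
/-! ### Polynomial and matrix toolkit -/

section Toolkit
open Matrix

lemma eval_charpoly' {ι : Type*} [Fintype ι] [DecidableEq ι] (M : Matrix ι ι ℝ) (x : ℝ) :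
    (M.charpoly).eval x = (x • (1 : Matrix ι ι ℝ) - M).det := by
  rw [Matrix.charpoly, show (Polynomial.eval x : Polynomial ℝ → ℝ) = Polynomial.evalRingHom x from rfl,
    RingHom.map_det]
  congr 1
  ext i j
  by_cases h : i = j
  · subst h
    simp [Matrix.charmatrix_apply_eq, Matrix.one_apply_eq]
  · simp [Matrix.charmatrix_apply_ne _ _ _ h, Matrix.one_apply_ne h]

lemma det_smul_one_sub {ι : Type*} [Fintype ι] [DecidableEq ι] {x : ℝ} (hx : x ≠ 0)
    (M : Matrix ι ι ℝ) :
    (x • (1 : Matrix ι ι ℝ) - M).det = x ^ Fintype.card ι * (1 - x⁻¹ • M).det := by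
  rw [← Matrix.det_smul]
  congr 1
  rw [smul_sub, smul_smul, mul_inv_cancel₀ hx, one_smul]

lemma charpoly_mul_comm_pow {ι ι' : Type*} [Fintype ι] [Fintype ι']
    [DecidableEq ι] [DecidableEq ι'] (A : Matrix ι' ι ℝ) (B : Matrix ι ι' ℝ) :
    Polynomial.X ^ (Fintype.card ι) * (A * B).charpoly
      = Polynomial.X ^ (Fintype.card ι') * (B * A).charpoly := by
  apply Polynomial.eq_of_infinite_eval_eq
  apply Set.Infinite.mono (s := {x : ℝ | x ≠ 0})
  swap
  · exact (Set.finite_singleton (0:ℝ)).infinite_compl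
  intro x hx
  simp only [Set.mem_setOf_eq] at hx ⊢
  rw [Polynomial.eval_mul, Polynomial.eval_mul, Polynomial.eval_pow, Polynomial.eval_pow,
    Polynomial.eval_X, eval_charpoly', eval_charpoly', det_smul_one_sub hx, det_smul_one_sub hx]
  have h1 : (1 - x⁻¹ • (A * B)).det = (1 - x⁻¹ • (B * A)).det := by
    rw [← Matrix.smul_mul, Matrix.det_one_sub_mul_comm, Matrix.mul_smul]
  rw [h1]; ring

lemma card_le_of_mulVec_ker {ι ι' : Type*} [Fintype ι] [Fintype ι'] (A : Matrix ι' ι ℝ)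
    (h : ∀ x, A.mulVec x = 0 → x = 0) : Fintype.card ι ≤ Fintype.card ι' := by
  have hinj : Function.Injective A.mulVecLin := by
    rw [← LinearMap.ker_eq_bot, LinearMap.ker_eq_bot']
    intro m hm
    exact h m hm
  have := LinearMap.finrank_le_finrank_of_injective hinj
  rwa [Module.finrank_fintype_fun_eq_card, Module.finrank_fintype_fun_eq_card] at this

lemma quad_transpose_mul {ι ι' : Type*} [Fintype ι] [Fintype ι'] (A : Matrix ι' ι ℝ)
    (x : ι → ℝ) :
    x ⬝ᵥ ((Aᵀ * A).mulVec x) = (A.mulVec x) ⬝ᵥ (A.mulVec x) := by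
  rw [← Matrix.mulVec_mulVec, Matrix.dotProduct_mulVec, Matrix.vecMul_transpose]

lemma dotProduct_self_nonneg' {ι : Type*} [Fintype ι] (x : ι → ℝ) : 0 ≤ x ⬝ᵥ x :=
  Finset.sum_nonneg fun i _ => mul_self_nonneg (x i)

end Toolkit
/-! ### Sums over covers as sums over levels -/

section Covers
variable {M : Type*} [AddCommMonoid M] [TopologicalSpace M] [T2Space M]

lemma tsum_covers_upper {m : ℕ} (l : Finset P) (hm : l.card = m) [Fintype (Lvl P (m+1))]
    (f : Finset P → M) :
    ∑' ν : {ν : Finset P // CoversF l ν}, f ν.1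
      = ∑ x : Lvl P (m+1), if CoversF l x.1 then f x.1 else 0 := by
  letI : Fintype {ν : Finset P // CoversF l ν} :=
    Fintype.ofInjective (fun ν => (⟨ν.1, ν.2.2.1, by rw [ν.2.2.2.2, hm]⟩ : Lvl P (m+1)))
      (by intro a b h; have h2 := congrArg Subtype.val h; exact Subtype.ext h2)
  rw [tsum_fintype, ← Finset.sum_filter]
  refine Finset.sum_bij (fun ν _ => (⟨ν.1, ν.2.2.1, by rw [ν.2.2.2.2, hm]⟩ : Lvl P (m+1)))
    (fun a _ => ?_) (by intro a _ b _ h; have h2 := congrArg Subtype.val h; exact Subtype.ext h2) (fun b hb => ?_)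
    (fun a _ => rfl)
  · simp only [Finset.mem_filter, Finset.mem_univ, true_and]
    exact a.2
  · simp only [Finset.mem_filter, Finset.mem_univ, true_and] at hb
    exact ⟨⟨b.1, hb⟩, Finset.mem_univ _, Subtype.ext rfl⟩

lemma tsum_covers_lower {m : ℕ} (l : Finset P) (hm : l.card = m) [Fintype (Lvl P (m-1))]
    (f : Finset P → M) :
    ∑' μ : {μ : Finset P // CoversF μ l}, f μ.1
      = ∑ x : Lvl P (m-1), if CoversF x.1 l then f x.1 else 0 := by
  letI : Fintype {μ : Finset P // CoversF μ l} :=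
    Fintype.ofInjective (fun μ => (⟨μ.1, μ.2.1, by have := μ.2.2.2.2; omega⟩ : Lvl P (m-1)))
      (by intro a b h; have h2 := congrArg Subtype.val h; exact Subtype.ext h2)
  rw [tsum_fintype, ← Finset.sum_filter]
  refine Finset.sum_bij (fun μ _ => (⟨μ.1, μ.2.1, by have := μ.2.2.2.2; omega⟩ : Lvl P (m-1)))
    (fun a _ => ?_) (by intro a _ b _ h; have h2 := congrArg Subtype.val h; exact Subtype.ext h2) (fun b hb => ?_)
    (fun a _ => rfl)
  · simp only [Finset.mem_filter, Finset.mem_univ, true_and]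
    exact a.2
  · simp only [Finset.mem_filter, Finset.mem_univ, true_and] at hb
    exact ⟨⟨b.1, hb⟩, Finset.mem_univ _, Subtype.ext rfl⟩

end Covers

/-! ### The Kerov condition, in real form over levels -/

lemma kerov_real {κ : Finset P → Finset P → ℝ} {q : P → ℝ} {t : ℝ}
    (hK : KerovCond κ (fun x => ((q x : ℂ)) ^ 2) (t : ℂ)) {m : ℕ} {l : Finset P}
    (hl : IsIdealF l) (hm : l.card = m)
    [Fintype (Lvl P (m+1))] [Fintype (Lvl P (m-1))] :
    (∑ ν : Lvl P (m+1), if CoversF l ν.1 then κ l ν.1 ^ 2 * bx (fun x => q x ^ 2) l ν.1 else 0)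
      - (∑ μ : Lvl P (m-1), if CoversF μ.1 l then κ μ.1 l ^ 2 * bx (fun x => q x ^ 2) μ.1 l else 0)
      = 2 * m + t := by
  have h := hK l hl
  rw [tsum_covers_upper l hm (fun ν => (κ l ν : ℂ)^2 * bx (fun x => ((q x : ℂ))^2) l ν),
    tsum_covers_lower l hm (fun μ => (κ μ l : ℂ)^2 * bx (fun x => ((q x : ℂ))^2) μ l)] at h
  have e1 : ∀ μ ν : Finset P,
      (κ μ ν : ℂ)^2 * bx (fun x => ((q x : ℂ))^2) μ ν
        = ((κ μ ν ^ 2 * bx (fun x => q x ^ 2) μ ν : ℝ) : ℂ) := by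
    intro μ ν
    simp only [bx]
    push_cast
    ring
  have h2 : ((( ∑ ν : Lvl P (m+1), if CoversF l ν.1 then κ l ν.1 ^ 2 * bx (fun x => q x ^ 2) l ν.1 else 0)
      - (∑ μ : Lvl P (m-1), if CoversF μ.1 l then κ μ.1 l ^ 2 * bx (fun x => q x ^ 2) μ.1 l else 0) : ℝ) : ℂ)
      = ((2 * m + t : ℝ) : ℂ) := by
    rw [Complex.ofReal_sub, Complex.ofReal_sum, Complex.ofReal_sum]
    simp only [apply_ite (Complex.ofReal), Complex.ofReal_zero, ← e1]
    rw [h, hm]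
    push_cast
    ring
  exact_mod_cast h2
open Matrix
/-! ### The weighted adjacency matrices and the commutation relation -/

/-- Matrix of the operator `U` (raw weights `κ·q`) from level `n` to level `n+1`. -/
noncomputable def Wmat (κ : Finset P → Finset P → ℝ) (q : P → ℝ) (n : ℕ) :
    Matrix (Lvl P (n+1)) (Lvl P n) ℝ :=
  Matrix.of fun ν l => if CoversF l.1 ν.1 then κ l.1 ν.1 * bx q l.1 ν.1 else 0

lemma offdiag_sum {κ : Finset P → Finset P → ℝ} {q : P → ℝ} (hUD : UDSelfDual κ)
    {m : ℕ} {l l' : Finset P} (hl : IsIdealF l) (hl' : IsIdealF l') (hne : l ≠ l')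
    (hcard : l'.card = l.card) (hm : l.card = m)
    [Fintype (Lvl P (m+1))] [Fintype (Lvl P (m-1))] :
    ∑ ν : Lvl P (m+1), (if CoversF l ν.1 then κ l ν.1 * bx q l ν.1 else 0) *
        (if CoversF l' ν.1 then κ l' ν.1 * bx q l' ν.1 else 0)
      = ∑ μ : Lvl P (m-1), (if CoversF μ.1 l then κ μ.1 l * bx q μ.1 l else 0) *
        (if CoversF μ.1 l' then κ μ.1 l' * bx q μ.1 l' else 0) := by
  have hie := Finset.card_union_add_card_inter l l'
  by_cases hU : (l ∪ l').card = l.card + 1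
  · obtain ⟨hc1, hc2, hc3, hc4, hb1, hb2⟩ := quadrangle hl hl' hne hcard hU
    have hm1 : m ≥ 1 := by
      rcases Nat.eq_zero_or_pos m with h0 | h; swap; · omega
      exfalso; apply hne
      rw [Finset.card_eq_zero.mp (by omega : l.card = 0),
        Finset.card_eq_zero.mp (by omega : l'.card = 0)]
    have hν : ((l ∪ l').card) = m + 1 := by omega
    have hμ : ((l ∩ l').card) = m - 1 := by omega
    set ν₀ : Lvl P (m+1) := ⟨l ∪ l', isIdealF_union hl hl', hν⟩ with hν₀
    set μ₀ : Lvl P (m-1) := ⟨l ∩ l', isIdealF_inter hl hl', hμ⟩ with hμ₀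
    rw [Finset.sum_eq_single_of_mem ν₀ (Finset.mem_univ _), Finset.sum_eq_single_of_mem μ₀ (Finset.mem_univ _)]
    · rw [if_pos hc1, if_pos hc2, if_pos hc3, if_pos hc4]
      have e1 : bx q l (l ∪ l') = bx q (l ∩ l') l' := by rw [bx, bx, hb1]
      have e2 : bx q l' (l ∪ l') = bx q (l ∩ l') l := by rw [bx, bx, hb2]
      have e3 := hUD (l ∩ l') l l' (l ∪ l') hc3 hc1 hc4 hc2 hne
      calc (κ l (l ∪ l') * bx q l (l ∪ l')) * (κ l' (l ∪ l') * bx q l' (l ∪ l'))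
          = (κ l' (l ∪ l') * κ l (l ∪ l')) * (bx q (l ∩ l') l' * bx q (l ∩ l') l) := by
            rw [e1, e2]; ring
        _ = (κ (l ∩ l') l' * κ (l ∩ l') l) * (bx q (l ∩ l') l' * bx q (l ∩ l') l) := by rw [← e3]
        _ = (κ (l ∩ l') l * bx q (l ∩ l') l) * (κ (l ∩ l') l' * bx q (l ∩ l') l') := by ring
    · intro b _ hb
      by_cases h1 : CoversF b.1 l ∧ CoversF b.1 l'
      · exact absurd (Subtype.ext (common_lower_eq hne hcard h1.1 h1.2)) hb
      · rcases not_and_or.mp h1 with h | h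
        · rw [if_neg h, zero_mul]
        · rw [if_neg h, mul_zero]
    · intro b _ hb
      by_cases h1 : CoversF l b.1 ∧ CoversF l' b.1
      · exfalso; exact hb (Subtype.ext (common_cover_eq hne hcard h1.1 h1.2))
      · rcases not_and_or.mp h1 with h | h
        · rw [if_neg h, zero_mul]
        · rw [if_neg h, mul_zero]
  · rw [Finset.sum_eq_zero, Finset.sum_eq_zero]
    · intro μ _
      by_cases h1 : CoversF μ.1 l ∧ CoversF μ.1 l'
      · exfalso
        have heq := common_lower_eq hne hcard h1.1 h1.2
        have := h1.1.2.2.2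
        rw [heq] at this
        omega
      · rcases not_and_or.mp h1 with h | h
        · rw [if_neg h, zero_mul]
        · rw [if_neg h, mul_zero]
    · intro ν _
      by_cases h1 : CoversF l ν.1 ∧ CoversF l' ν.1
      · exfalso
        have heq := common_cover_eq hne hcard h1.1 h1.2
        have := h1.1.2.2.2
        rw [heq] at this
        omega
      · rcases not_and_or.mp h1 with h | h
        · rw [if_neg h, zero_mul]
        · rw [if_neg h, mul_zero]
lemma diag_sum {κ : Finset P → Finset P → ℝ} {q : P → ℝ} {t : ℝ}
    (hK : KerovCond κ (fun x => ((q x : ℂ)) ^ 2) (t : ℂ)) {m mu md : ℕ} {l : Finset P}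
    (hl : IsIdealF l) (hm : l.card = m) (hmu : m + 1 = mu) (hmd : m - 1 = md)
    [Fintype (Lvl P mu)] [Fintype (Lvl P md)] :
    ∑ ν : Lvl P mu, (if CoversF l ν.1 then κ l ν.1 * bx q l ν.1 else 0) *
        (if CoversF l ν.1 then κ l ν.1 * bx q l ν.1 else 0)
      = (∑ μ : Lvl P md, (if CoversF μ.1 l then κ μ.1 l * bx q μ.1 l else 0) *
        (if CoversF μ.1 l then κ μ.1 l * bx q μ.1 l else 0)) + (2 * m + t) := by
  subst hmu; subst hmd
  have hker := kerov_real hK hl hm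
  have e1 : ∀ (μ ν : Finset P), (if CoversF μ ν then κ μ ν * bx q μ ν else 0) *
      (if CoversF μ ν then κ μ ν * bx q μ ν else 0)
      = if CoversF μ ν then κ μ ν ^ 2 * bx (fun x => q x ^ 2) μ ν else 0 := by
    intro μ ν
    split_ifs with h
    · rw [← bx_sq h q]; ring
    · ring
  simp only [e1]
  linarith [hker]

lemma offdiag_sum' {κ : Finset P → Finset P → ℝ} {q : P → ℝ} (hUD : UDSelfDual κ)
    {m mu md : ℕ} {l l' : Finset P} (hl : IsIdealF l) (hl' : IsIdealF l') (hne : l ≠ l')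
    (hcard : l'.card = l.card) (hm : l.card = m) (hmu : m + 1 = mu) (hmd : m - 1 = md)
    [Fintype (Lvl P mu)] [Fintype (Lvl P md)] :
    ∑ ν : Lvl P mu, (if CoversF l ν.1 then κ l ν.1 * bx q l ν.1 else 0) *
        (if CoversF l' ν.1 then κ l' ν.1 * bx q l' ν.1 else 0)
      = ∑ μ : Lvl P md, (if CoversF μ.1 l then κ μ.1 l * bx q μ.1 l else 0) *
        (if CoversF μ.1 l' then κ μ.1 l' * bx q μ.1 l' else 0) := by
  subst hmu; subst hmd
  exact offdiag_sum hUD hl hl' hne hcard hm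

lemma level_zero_unique (l : Lvl P 0) (l' : Lvl P 0) : l = l' := by
  apply Subtype.ext
  rw [Finset.card_eq_zero.mp l.2.2, Finset.card_eq_zero.mp l'.2.2]

lemma commA0 {κ : Finset P → Finset P → ℝ} {q : P → ℝ} {t : ℝ}
    (hK : KerovCond κ (fun x => ((q x : ℂ)) ^ 2) (t : ℂ))
    [Fintype (Lvl P 0)] [Fintype (Lvl P 1)] :
    (Wmat κ q 0)ᵀ * Wmat κ q 0 = t • (1 : Matrix (Lvl P 0) (Lvl P 0) ℝ) := by
  ext l l'
  rw [show l' = l from level_zero_unique l' l]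
  have hl : IsIdealF l.1 := l.2.1
  have hm : l.1.card = 0 := l.2.2
  simp only [Matrix.mul_apply, Matrix.transpose_apply, Wmat, Matrix.of_apply]
  have hd := diag_sum hK hl hm rfl (show (0:ℕ) - 1 = 0 from rfl)
  rw [hd]
  have hzero : ∑ μ : Lvl P 0, (if CoversF μ.1 l.1 then κ μ.1 l.1 * bx q μ.1 l.1 else 0) *
      (if CoversF μ.1 l.1 then κ μ.1 l.1 * bx q μ.1 l.1 else 0) = 0 := by
    apply Finset.sum_eq_zero
    intro μ _
    have : ¬ CoversF μ.1 l.1 := fun h => by have := h.2.2.2; omega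
    rw [if_neg this, zero_mul]
  rw [hzero, Matrix.smul_apply, Matrix.one_apply_eq, smul_eq_mul, mul_one]
  norm_num

lemma commAS {κ : Finset P → Finset P → ℝ} {q : P → ℝ} {t : ℝ}
    (hUD : UDSelfDual κ) (hK : KerovCond κ (fun x => ((q x : ℂ)) ^ 2) (t : ℂ)) (n : ℕ)
    [Fintype (Lvl P n)] [Fintype (Lvl P (n+1))] [Fintype (Lvl P (n+2))] :
    (Wmat κ q (n+1))ᵀ * Wmat κ q (n+1)
      = Wmat κ q n * (Wmat κ q n)ᵀ
        + (2 * (n+1) + t) • (1 : Matrix (Lvl P (n+1)) (Lvl P (n+1)) ℝ) := by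
  ext l l'
  have hl : IsIdealF l.1 := l.2.1
  have hl' : IsIdealF l'.1 := l'.2.1
  have hm : l.1.card = n + 1 := l.2.2
  have hcard : l'.1.card = l.1.card := by rw [l.2.2, l'.2.2]
  simp only [Matrix.mul_apply, Matrix.add_apply, Matrix.transpose_apply, Wmat, Matrix.of_apply]
  by_cases hne : l = l'
  · subst hne
    have hd := diag_sum hK hl hm rfl (show (n+1:ℕ) - 1 = n from rfl)
    rw [hd, Matrix.smul_apply, Matrix.one_apply_eq, smul_eq_mul, mul_one]
    push_cast
    ring
  · have hne' : l.1 ≠ l'.1 := fun h => hne (Subtype.ext h)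
    have ho := offdiag_sum' (q := q) hUD hl hl' hne' hcard hm rfl (show (n+1:ℕ) - 1 = n from rfl)
    rw [ho, Matrix.smul_apply, Matrix.one_apply_ne hne, smul_zero, add_zero]
/-! ### Spectral analysis of `UD` -/

/-- Eigenvalue `(n+1)(n+t) - j(j-1+t)`. -/
noncomputable def aEv (t : ℝ) (n j : ℕ) : ℝ :=
  ((n : ℝ) + 1) * ((n : ℝ) + t) - (j : ℝ) * ((j : ℝ) - 1 + t)

/-- Multiplicity `#𝔾_j - #𝔾_{j-1}`. -/
noncomputable def mcard (P : Type*) [PartialOrder P] (j : ℕ) : ℕ :=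
  Nat.card (Lvl P j) - (if j = 0 then 0 else Nat.card (Lvl P (j-1)))

lemma card_lvl_zero [Fintype (Lvl P 0)] : Fintype.card (Lvl P 0) = 1 :=
  Fintype.card_eq_one_iff.mpr
    ⟨⟨∅, isIdealF_empty, Finset.card_empty⟩, fun y => level_zero_unique y _⟩

lemma mcard_zero [Fintype (Lvl P 0)] : mcard P 0 = 1 := by
  rw [mcard, if_pos rfl, Nat.sub_zero, Nat.card_eq_fintype_card, card_lvl_zero]

lemma charpoly_smul_one {ι : Type*} [Fintype ι] [DecidableEq ι] (c : ℝ) :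
    (c • (1 : Matrix ι ι ℝ)).charpoly = (Polynomial.X - Polynomial.C c) ^ (Fintype.card ι) := by
  apply Polynomial.funext
  intro x
  rw [eval_charpoly', Polynomial.eval_pow, Polynomial.eval_sub, Polynomial.eval_X,
    Polynomial.eval_C]
  rw [show x • (1 : Matrix ι ι ℝ) - c • 1 = (x - c) • 1 by rw [sub_smul],
    Matrix.det_smul, Matrix.det_one, mul_one]

/-- The inductive statement: spectrum of `UD` at level `n`, and injectivity of `U_n`. -/
def SpecP (κ : Finset P → Finset P → ℝ) (q : P → ℝ) (t : ℝ) (n : ℕ)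
    [Fintype (Lvl P n)] [Fintype (Lvl P (n+1))] : Prop :=
  (((Wmat κ q n)ᵀ * Wmat κ q n).charpoly
      = ∏ j ∈ Finset.range (n+1), (Polynomial.X - Polynomial.C (aEv t n j)) ^ (mcard P j))
    ∧ (∀ x : Lvl P n → ℝ, (Wmat κ q n).mulVec x = 0 → x = 0)

lemma specP_zero {κ : Finset P → Finset P → ℝ} {q : P → ℝ} {t : ℝ}
    (ht : 0 < t) (hK : KerovCond κ (fun x => ((q x : ℂ)) ^ 2) (t : ℂ))
    [Fintype (Lvl P 0)] [Fintype (Lvl P 1)] :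
    SpecP κ q t 0 := by
  have hW := commA0 (κ := κ) (q := q) hK
  constructor
  · rw [hW, charpoly_smul_one, card_lvl_zero]
    rw [Finset.prod_range_one, mcard_zero]
    congr 1
    rw [aEv]
    push_cast
    ring
  · intro x hx
    have h1 : ((Wmat κ q 0)ᵀ * Wmat κ q 0).mulVec x = 0 := by
      rw [← Matrix.mulVec_mulVec, hx, Matrix.mulVec_zero]
    rw [hW] at h1
    have h2 : t • x = 0 := by
      rwa [Matrix.smul_mulVec, Matrix.one_mulVec] at h1
    rcases smul_eq_zero.mp h2 with h | h
    · exact absurd h (ne_of_gt ht)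
    · exact h
lemma specP_succ {κ : Finset P → Finset P → ℝ} {q : P → ℝ} {t : ℝ}
    (ht : 0 < t) (hUD : UDSelfDual κ) (hK : KerovCond κ (fun x => ((q x : ℂ)) ^ 2) (t : ℂ))
    (n : ℕ) [FA : Fintype (Lvl P n)] [FB : Fintype (Lvl P (n+1))] [FC : Fintype (Lvl P (n+2))]
    (ih : SpecP κ q t n) : SpecP κ q t (n+1) := by
  obtain ⟨ih1, ih2⟩ := ih
  have hcle : Fintype.card (Lvl P n) ≤ Fintype.card (Lvl P (n+1)) :=
    card_le_of_mulVec_ker _ ih2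
  have hMc : mcard P (n+1) = Fintype.card (Lvl P (n+1)) - Fintype.card (Lvl P n) := by
    rw [mcard, if_neg (Nat.succ_ne_zero n), Nat.add_sub_cancel, Nat.card_eq_fintype_card,
      Nat.card_eq_fintype_card]
  have hcomm := commAS (q := q) hUD hK n
  have hDU : (Wmat κ q n * (Wmat κ q n)ᵀ).charpoly
      = Polynomial.X ^ (mcard P (n+1)) * ((Wmat κ q n)ᵀ * Wmat κ q n).charpoly := by
    have h := charpoly_mul_comm_pow (Wmat κ q n) ((Wmat κ q n)ᵀ)
    have hsplit : (Polynomial.X : Polynomial ℝ) ^ (Fintype.card (Lvl P (n+1)))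
        = Polynomial.X ^ (Fintype.card (Lvl P (n+1)) - Fintype.card (Lvl P n))
          * Polynomial.X ^ (Fintype.card (Lvl P n)) := by
      rw [← pow_add]; congr 1; omega
    rw [hsplit] at h
    apply mul_left_cancel₀
      (pow_ne_zero (Fintype.card (Lvl P n)) (Polynomial.X_ne_zero (R := ℝ)))
    rw [h, hMc]; ring
  constructor
  · apply Polynomial.funext
    intro x
    rw [hcomm, eval_charpoly']
    have e1 : x • (1 : Matrix (Lvl P (n+1)) (Lvl P (n+1)) ℝ)
        - (Wmat κ q n * (Wmat κ q n)ᵀ + (2*(n+1) + t) • 1)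
        = (x - (2*(n+1) + t)) • 1 - Wmat κ q n * (Wmat κ q n)ᵀ := by
      rw [sub_smul]; abel
    rw [e1, ← eval_charpoly', hDU, ih1]
    simp only [Polynomial.eval_mul, Polynomial.eval_pow, Polynomial.eval_prod,
      Polynomial.eval_sub, Polynomial.eval_X, Polynomial.eval_C]
    conv_rhs => rw [Finset.prod_range_succ]
    have hlast : aEv t (n+1) (n+1) = 2*((n:ℝ)+1) + t := by rw [aEv]; push_cast; ring
    have hshift : ∀ j : ℕ, x - (2*((n:ℝ)+1) + t) - aEv t n j = x - aEv t (n+1) j := by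
      intro j; rw [aEv, aEv]; push_cast; ring
    rw [hlast, mul_comm]
    congr 1
    apply Finset.prod_congr rfl
    intro j _
    rw [hshift]
  · intro x hx
    have h1 : ((Wmat κ q (n+1))ᵀ * Wmat κ q (n+1)).mulVec x = 0 := by
      rw [← Matrix.mulVec_mulVec, hx, Matrix.mulVec_zero]
    rw [hcomm] at h1
    have h2 : dotProduct x ((Wmat κ q n * (Wmat κ q n)ᵀ).mulVec x)
        + (2*((n:ℝ)+1) + t) * (dotProduct x x) = 0 := by
      have h := congrArg (fun v => dotProduct x v) h1
      simpa [Matrix.add_mulVec, Matrix.smul_mulVec, Matrix.one_mulVec,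
        dotProduct_add, dotProduct_smul, smul_eq_mul] using h
    have h3 : 0 ≤ dotProduct x ((Wmat κ q n * (Wmat κ q n)ᵀ).mulVec x) := by
      have hq2 := quad_transpose_mul ((Wmat κ q n)ᵀ) x
      rw [Matrix.transpose_transpose] at hq2
      rw [hq2]
      exact dotProduct_self_nonneg' _
    have h4 : 0 < 2*((n:ℝ)+1) + t := by positivity
    have h5 : dotProduct x x = 0 := by nlinarith [dotProduct_self_nonneg' x]
    exact dotProduct_self_eq_zero.mp h5

lemma spec_ind {κ : Finset P → Finset P → ℝ} {q : P → ℝ} {t : ℝ}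
    (ht : 0 < t) (hUD : UDSelfDual κ) (hK : KerovCond κ (fun x => ((q x : ℂ)) ^ 2) (t : ℂ))
    (hLF : LevelsFinite P) :
    ∀ n (F0 : Fintype (Lvl P n)) (F1 : Fintype (Lvl P (n+1))), @SpecP P _ κ q t n F0 F1 := by
  intro n
  induction n with
  | zero =>
    intro F0 F1
    exact @specP_zero P _ κ q t ht hK F0 F1
  | succ n ih =>
    intro F0 F1
    letI FA : Fintype (Lvl P n) := (hLF n).fintype
    exact @specP_succ P _ κ q t ht hUD hK n FA F0 F1 (ih FA F0)
/-! ### The up/down chain as a conjugate of `UD` -/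

lemma prod_q_pos {q : P → ℝ} (hq : ∀ x, 0 < q x) (l : Finset P) : 0 < ∏ x ∈ l, q x :=
  Finset.prod_pos fun x _ => hq x

lemma cover_prod {q : P → ℝ} {l ν : Finset P} (h : CoversF l ν) :
    ∏ x ∈ ν, q x = bx q l ν * ∏ x ∈ l, q x := by
  obtain ⟨x, hx⟩ := h.box_singleton
  rw [← Finset.prod_sdiff h.2.2.1, hx, Finset.prod_singleton, bx_single q hx]

lemma bx_pos {q : P → ℝ} (hq : ∀ x, 0 < q x) {l ν : Finset P} (h : CoversF l ν) :
    0 < bx q l ν := by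
  obtain ⟨x, hx⟩ := h.box_singleton
  rw [bx_single q hx]; exact hq x

lemma Mcoh_pos {κ : Finset P → Finset P → ℝ} {q : P → ℝ} {t : ℝ}
    (hκ : EdgePositive κ) (hq : ∀ x, 0 < q x) (ht : 0 < t) {l : Finset P}
    (hl : IsIdealF l) : 0 < Mcoh κ q t l := by
  have h1 := dimT_pos hκ l.card l hl rfl
  have h2 : (0:ℝ) < ∏ x ∈ l, q x ^ 2 := Finset.prod_pos fun x _ => pow_pos (hq x) 2
  have h3 : (0:ℝ) < (Nat.factorial l.card : ℝ) := by positivity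
  have h4 : 0 < Polynomial.eval t (ascPochhammer ℝ l.card) := ascPochhammer_pos _ _ ht
  rw [Mcoh]
  exact div_pos (mul_pos (pow_pos h1 2) h2) (mul_pos h3 h4)

lemma pUp_mul_pDown {κ : Finset P → Finset P → ℝ} {q : P → ℝ} {t : ℝ}
    (hκ : EdgePositive κ) (hq : ∀ x, 0 < q x) (ht : 0 < t)
    {l l' ν : Finset P} (hcard : l'.card = l.card)
    (hc1 : CoversF l ν) (hc2 : CoversF l' ν) :
    pUp κ q t l ν * pDown κ ν l'
      = (((l.card:ℝ)+1) * ((l.card:ℝ)+t))⁻¹ *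
        ((dimT κ l * ∏ x ∈ l, q x)⁻¹ *
          ((κ l ν * bx q l ν) * (κ l' ν * bx q l' ν)) * (dimT κ l' * ∏ x ∈ l', q x)) := by
  have hl : IsIdealF l := hc1.1
  have hl' : IsIdealF l' := hc2.1
  have hν : IsIdealF ν := hc1.2.1
  have hA := dimT_pos hκ l.card l hl rfl
  have hA' := dimT_pos hκ l'.card l' hl' rfl
  have hB := dimT_pos hκ ν.card ν hν rfl
  have hQl := prod_q_pos hq l
  have hQl' := prod_q_pos hq l'
  have hb1 := bx_pos hq hc1
  have hb2 := bx_pos hq hc2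
  have hκ1 := hκ _ _ hc1
  have hκ2 := hκ _ _ hc2
  have hνc : ν.card = l.card + 1 := hc1.2.2.2
  have hfac : (0:ℝ) < (Nat.factorial l.card : ℝ) := by positivity
  have hasc : 0 < Polynomial.eval t (ascPochhammer ℝ l.card) := ascPochhammer_pos _ _ ht
  have hmt : 0 < (l.card : ℝ) + t := by positivity
  have hQν : ∏ x ∈ ν, q x = bx q l ν * ∏ x ∈ l, q x := cover_prod hc1
  have hQν' : ∏ x ∈ ν, q x = bx q l' ν * ∏ x ∈ l', q x := cover_prod hc2
  have hsq : ∀ s : Finset P, ∏ x ∈ s, q x ^ 2 = (∏ x ∈ s, q x)^2 := fun s =>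
    Finset.prod_pow s 2 q
  rw [pUp, pDown, if_pos hc1, if_pos hc2, Mcoh, Mcoh, hνc]
  rw [Nat.factorial_succ, ascPochhammer_succ_eval]
  simp only [hsq]
  rw [hQν]
  have hbb : bx q l ν * ∏ x ∈ l, q x = bx q l' ν * ∏ x ∈ l', q x := by
    rw [← hQν, hQν']
  have hQl'e : ∏ x ∈ l', q x = bx q l ν * (∏ x ∈ l, q x) / bx q l' ν := by
    rw [eq_div_iff hb2.ne']
    linarith [hbb]
  rw [hQl'e]
  push_cast
  have hc1' : (0:ℝ) < (l.card:ℝ) + 1 := Nat.cast_add_one_pos l.card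
  generalize dimT κ ν = B at *
  generalize bx q l ν = b1 at *
  generalize bx q l' ν = b2 at *
  generalize ∏ x ∈ l, q x = Q at *
  generalize Polynomial.eval t (ascPochhammer ℝ l.card) = E at *
  generalize ((l.card.factorial : ℕ) : ℝ) = F at *
  generalize (l.card : ℝ) = c at *
  clear hQl'e hbb hQν hQν' hsq hQl'
  rw [add_comm t c]
  field_simp
lemma TnMat_eq {κ : Finset P → Finset P → ℝ} {q : P → ℝ} {t : ℝ}
    (hκ : EdgePositive κ) (hq : ∀ x, 0 < q x) (ht : 0 < t)
    {k : ℕ} {l l' : Finset P} (hl : IsIdealF l) (hl' : IsIdealF l')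
    (hcard : l'.card = l.card) (hm : l.card = k) [Fintype (Lvl P (k+1))] :
    TnMat κ q t l l' = (((k:ℝ)+1) * ((k:ℝ)+t))⁻¹ *
      ((dimT κ l * ∏ x ∈ l, q x)⁻¹ *
        (∑ ν : Lvl P (k+1), (if CoversF l ν.1 then κ l ν.1 * bx q l ν.1 else 0) *
          (if CoversF l' ν.1 then κ l' ν.1 * bx q l' ν.1 else 0)) *
        (dimT κ l' * ∏ x ∈ l', q x)) := by
  subst hm
  rw [TnMat, tsum_fintype, Finset.mul_sum, Finset.sum_mul, Finset.mul_sum]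
  apply Finset.sum_congr rfl
  intro ν _
  by_cases hc1 : CoversF l ν.1
  · by_cases hc2 : CoversF l' ν.1
    · rw [if_pos hc1, if_pos hc2]
      rw [pUp_mul_pDown hκ hq ht hcard hc1 hc2]
    · rw [if_neg hc2, pDown, if_neg hc2]
      ring
  · rw [if_neg hc1, pUp, if_neg hc1]
    ring

lemma card_mono {κ : Finset P → Finset P → ℝ} {q : P → ℝ} {t : ℝ}
    (ht : 0 < t) (hUD : UDSelfDual κ) (hK : KerovCond κ (fun x => ((q x : ℂ)) ^ 2) (t : ℂ))
    (hLF : LevelsFinite P) (j : ℕ) :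
    Nat.card (Lvl P j) ≤ Nat.card (Lvl P (j+1)) := by
  letI F0 : Fintype (Lvl P j) := (hLF j).fintype
  letI F1 : Fintype (Lvl P (j+1)) := (hLF (j+1)).fintype
  have h := (spec_ind ht hUD hK hLF j F0 F1).2
  have h2 := card_le_of_mulVec_ker _ h
  rw [Nat.card_eq_fintype_card, Nat.card_eq_fintype_card]
  exact h2

lemma nat_card_lvl_zero (hLF : LevelsFinite P) : Nat.card (Lvl P 0) = 1 := by
  letI F0 : Fintype (Lvl P 0) := (hLF 0).fintype
  rw [Nat.card_eq_fintype_card, card_lvl_zero]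

lemma sum_mcard {κ : Finset P → Finset P → ℝ} {q : P → ℝ} {t : ℝ}
    (ht : 0 < t) (hUD : UDSelfDual κ) (hK : KerovCond κ (fun x => ((q x : ℂ)) ^ 2) (t : ℂ))
    (hLF : LevelsFinite P) (n : ℕ) :
    ∑ j ∈ Finset.range (n+1), mcard P j = Nat.card (Lvl P n) := by
  induction n with
  | zero =>
    rw [Finset.sum_range_one, mcard, if_pos rfl, Nat.sub_zero]
  | succ n ih =>
    rw [Finset.sum_range_succ, ih, mcard, if_neg (Nat.succ_ne_zero n), Nat.add_sub_cancel]
    have := card_mono ht hUD hK hLF n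
    omega
lemma final_charpoly {κ : Finset P → Finset P → ℝ} {q : P → ℝ} {t : ℝ}
    (hκ : EdgePositive κ) (hq : ∀ x, 0 < q x) (ht : 0 < t) (hUD : UDSelfDual κ)
    (hK : KerovCond κ (fun x => ((q x : ℂ)) ^ 2) (t : ℂ)) (hLF : LevelsFinite P)
    (n : ℕ) (F0 : Fintype (Lvl P n)) (F1 : Fintype (Lvl P (n+1))) :
    @Matrix.charpoly ℝ _ (Lvl P n) _ F0
        (Matrix.of fun l l' : Lvl P n => TnMat κ q t l.1 l'.1)
      = ∏ j ∈ Finset.range (n+1),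
          (Polynomial.X - Polynomial.C
            (1 - ((j:ℝ) * ((j:ℝ) - 1 + t)) / (((n:ℝ)+1) * ((n:ℝ)+t)))) ^ (mcard P j) := by
  obtain ⟨hsp, -⟩ := spec_ind ht hUD hK hLF n F0 F1
  have hDpos : ∀ l : Lvl P n, dimT κ l.1 * ∏ x ∈ l.1, q x ≠ 0 := fun l =>
    (mul_pos (dimT_pos hκ l.1.card l.1 l.2.1 rfl) (prod_q_pos hq l.1)).ne'
  have hc : (0:ℝ) < ((n:ℝ)+1) * ((n:ℝ)+t) := by positivity
  have hT : (Matrix.of fun l l' : Lvl P n => TnMat κ q t l.1 l'.1)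
      = (((n:ℝ)+1) * ((n:ℝ)+t))⁻¹ •
        (Matrix.diagonal (fun l : Lvl P n => (dimT κ l.1 * ∏ x ∈ l.1, q x)⁻¹)
          * ((Wmat κ q n)ᵀ * Wmat κ q n)
          * Matrix.diagonal (fun l : Lvl P n => dimT κ l.1 * ∏ x ∈ l.1, q x)) := by
    ext l l'
    have hTe := TnMat_eq (k := n) hκ hq ht l.2.1 l'.2.1 (by rw [l.2.2, l'.2.2]) l.2.2
    rw [Matrix.of_apply, hTe, Matrix.smul_apply, Matrix.mul_diagonal, Matrix.diagonal_mul,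
      smul_eq_mul]
    simp only [Matrix.mul_apply, Matrix.transpose_apply, Wmat, Matrix.of_apply]
  have hDD : Matrix.diagonal (fun l : Lvl P n => (dimT κ l.1 * ∏ x ∈ l.1, q x)⁻¹)
      * Matrix.diagonal (fun l : Lvl P n => dimT κ l.1 * ∏ x ∈ l.1, q x) = 1 := by
    rw [Matrix.diagonal_mul_diagonal,
      show (fun l : Lvl P n => (dimT κ l.1 * ∏ x ∈ l.1, q x)⁻¹ * (dimT κ l.1 * ∏ x ∈ l.1, q x))
        = fun _ => 1 from funext fun l => inv_mul_cancel₀ (hDpos l), Matrix.diagonal_one]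
  apply Polynomial.funext
  intro x
  rw [hT, eval_charpoly']
  have e2 : x • (1 : Matrix (Lvl P n) (Lvl P n) ℝ)
      - (((n:ℝ)+1) * ((n:ℝ)+t))⁻¹ •
        (Matrix.diagonal (fun l : Lvl P n => (dimT κ l.1 * ∏ x ∈ l.1, q x)⁻¹)
          * ((Wmat κ q n)ᵀ * Wmat κ q n)
          * Matrix.diagonal (fun l : Lvl P n => dimT κ l.1 * ∏ x ∈ l.1, q x))
      = Matrix.diagonal (fun l : Lvl P n => (dimT κ l.1 * ∏ x ∈ l.1, q x)⁻¹)
        * (x • 1 - (((n:ℝ)+1) * ((n:ℝ)+t))⁻¹ • ((Wmat κ q n)ᵀ * Wmat κ q n))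
        * Matrix.diagonal (fun l : Lvl P n => dimT κ l.1 * ∏ x ∈ l.1, q x) := by
    rw [Matrix.mul_sub, Matrix.sub_mul]
    congr 1
    · rw [Matrix.mul_smul, Matrix.mul_one, Matrix.smul_mul, hDD]
    · rw [Matrix.mul_smul, Matrix.smul_mul]
  rw [e2, Matrix.det_mul, Matrix.det_mul]
  have e3 : ∀ a b c' : ℝ, a * b * c' = b * (a * c') := by intros; ring
  rw [e3, ← Matrix.det_mul, hDD, Matrix.det_one, mul_one]
  have e4 : x • (1 : Matrix (Lvl P n) (Lvl P n) ℝ)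
      - (((n:ℝ)+1) * ((n:ℝ)+t))⁻¹ • ((Wmat κ q n)ᵀ * Wmat κ q n)
      = (((n:ℝ)+1) * ((n:ℝ)+t))⁻¹ •
        (((((n:ℝ)+1) * ((n:ℝ)+t)) * x) • 1 - (Wmat κ q n)ᵀ * Wmat κ q n) := by
    rw [smul_sub, smul_smul, inv_mul_cancel_left₀ hc.ne']
  rw [e4, Matrix.det_smul, ← eval_charpoly', hsp]
  simp only [Polynomial.eval_prod, Polynomial.eval_pow, Polynomial.eval_sub,
    Polynomial.eval_X, Polynomial.eval_C]
  have hN : ((((n:ℝ)+1) * ((n:ℝ)+t))⁻¹) ^ (Fintype.card (Lvl P n))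
      = ∏ j ∈ Finset.range (n+1), ((((n:ℝ)+1) * ((n:ℝ)+t))⁻¹) ^ (mcard P j) := by
    rw [Finset.prod_pow_eq_pow_sum, sum_mcard ht hUD hK hLF n, Nat.card_eq_fintype_card]
  rw [hN, ← Finset.prod_mul_distrib]
  apply Finset.prod_congr rfl
  intro j _
  rw [← mul_pow]
  congr 1
  rw [aEv]
  field_simp
lemma charpoly_instances {ι : Type*} (d1 d2 : DecidableEq ι) (f1 f2 : Fintype ι)
    (M : Matrix ι ι ℝ) :
    @Matrix.charpoly ℝ _ ι d1 f1 M = @Matrix.charpoly ℝ _ ι d2 f2 M := by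
  obtain rfl := Subsingleton.elim d1 d2
  obtain rfl := Subsingleton.elim f1 f2
  rfl

lemma rm_one {t : ℝ} (ht : 0 < t) (hLF : LevelsFinite P) (n : ℕ) :
    Polynomial.rootMultiplicity 1
        (∏ j ∈ Finset.range (n+1),
          (Polynomial.X - Polynomial.C
            (1 - ((j:ℝ) * ((j:ℝ) - 1 + t)) / (((n:ℝ)+1) * ((n:ℝ)+t)))) ^ (mcard P j))
      = 1 := by
  letI F0 : Fintype (Lvl P 0) := (hLF 0).fintype
  have hc : (0:ℝ) < ((n:ℝ)+1) * ((n:ℝ)+t) := by positivity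
  rw [Finset.prod_range_succ']
  have h0 : (1 : ℝ) - (((0:ℕ):ℝ) * (((0:ℕ):ℝ) - 1 + t)) / (((n:ℝ)+1) * ((n:ℝ)+t)) = 1 := by
    norm_num
  rw [h0, show mcard P 0 = 1 from mcard_zero, pow_one]
  have hQe : Polynomial.eval 1 (∏ j ∈ Finset.range n,
      (Polynomial.X - Polynomial.C
        (1 - (((j+1:ℕ)):ℝ) * ((((j+1:ℕ)):ℝ) - 1 + t) / (((n:ℝ)+1) * ((n:ℝ)+t)))) ^
        (mcard P (j+1))) ≠ 0 := by
    simp only [Polynomial.eval_prod, Polynomial.eval_pow, Polynomial.eval_sub,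
      Polynomial.eval_X, Polynomial.eval_C]
    rw [Finset.prod_ne_zero_iff]
    intro j _
    apply pow_ne_zero
    rw [sub_sub_cancel]
    have he : (((j+1:ℕ)):ℝ) * ((((j+1:ℕ)):ℝ) - 1 + t) = ((j:ℝ)+1) * ((j:ℝ)+t) := by
      push_cast; ring
    rw [he]
    exact (div_pos (by positivity) hc).ne'
  have hQ0 : (∏ j ∈ Finset.range n,
      (Polynomial.X - Polynomial.C
        (1 - (((j+1:ℕ)):ℝ) * ((((j+1:ℕ)):ℝ) - 1 + t) / (((n:ℝ)+1) * ((n:ℝ)+t)))) ^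
        (mcard P (j+1))) ≠ 0 := fun h => hQe (by rw [h, Polynomial.eval_zero])
  rw [Polynomial.rootMultiplicity_mul (mul_ne_zero hQ0 (Polynomial.X_sub_C_ne_zero 1)),
    Polynomial.rootMultiplicity_eq_zero (by simpa [Polynomial.IsRoot] using hQe),
    Polynomial.rootMultiplicity_X_sub_C_self, zero_add]
/-- the spectral structure of the up/down Markov chain `T_n`: its
characteristic polynomial is `∏_{j=0}^{n} (X − (1 − j(j−1+t)/((n+1)(n+t))))^{m_j}` with
`m_j = #𝔾_j − #𝔾_{j−1}` (and `#𝔾_{−1} = 0`), the level cardinalities being nondecreasing;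
in particular, the eigenvalue `1` of `T_n` is simple. -/
theorem statement10 {P : Type*} [PartialOrder P]
    (κ : Finset P → Finset P → ℝ) (q : P → ℝ) (t : ℝ)
    (hκ : EdgePositive κ) (hq : ∀ x : P, 0 < q x) (ht : 0 < t)
    (hLF : LevelsFinite P) (hUD : UDSelfDual κ)
    (hK : KerovCond κ (fun x => ((q x : ℂ)) ^ 2) (t : ℂ)) :
    ∀ (n : ℕ) (instF : Fintype (Lvl P n)) (instD : DecidableEq (Lvl P n)),
      (∀ j : ℕ, 1 ≤ j → j ≤ n → Nat.card (Lvl P (j - 1)) ≤ Nat.card (Lvl P j)) ∧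
      charpolyOf instF instD (Matrix.of fun l l' : Lvl P n => TnMat κ q t l.1 l'.1)
        = ∏ j ∈ Finset.range (n + 1),
            (Polynomial.X - Polynomial.C
                (1 - ((j : ℝ) * ((j : ℝ) - 1 + t)) / (((n : ℝ) + 1) * ((n : ℝ) + t)))) ^
              (Nat.card (Lvl P j) - (if j = 0 then 0 else Nat.card (Lvl P (j - 1)))) ∧
      Polynomial.rootMultiplicity 1
          (charpolyOf instF instD (Matrix.of fun l l' : Lvl P n => TnMat κ q t l.1 l'.1))
        = 1 := by
  intro n instF instD
  have F1 : Fintype (Lvl P (n+1)) := (hLF (n+1)).fintype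
  have key : charpolyOf instF instD (Matrix.of fun l l' : Lvl P n => TnMat κ q t l.1 l'.1)
      = ∏ j ∈ Finset.range (n + 1),
          (Polynomial.X - Polynomial.C
            (1 - ((j : ℝ) * ((j : ℝ) - 1 + t)) / (((n : ℝ) + 1) * ((n : ℝ) + t)))) ^
          (mcard P j) := by
    rw [charpolyOf, charpoly_instances instD _ instF instF]
    exact final_charpoly hκ hq ht hUD hK hLF n instF F1
  refine ⟨?_, ?_, ?_⟩
  · intro j h1 _
    obtain ⟨k, rfl⟩ : ∃ k, j = k + 1 := ⟨j - 1, by omega⟩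
    simpa using card_mono ht hUD hK hLF k
  · exact key
  · rw [key]
    exact rm_one ht hLF n

end IdealGraph
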